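/- Quantitative implicit function theorem: Let X, Y, Z be Banach spaces, U ⊆ X, V ⊆ Y open, F ∈ C¹(U×V; Z), a = (a1,a2) ∈ U×V with F(a) = 0 and D₂F(a) : Y → Z an isomorphism. Set λ = (1/2)(1 + ‖D₂F(a)^{-1}‖(1 + ‖D₁F(a)‖))^{-1} and let r > 0 be such that B̄_r(a) ⊆ U×V and ‖DF(x,y) − DF(x̃,ỹ)‖ ≤ λ for all (x,y),(x̃,ỹ) ∈ B̄_r(a). Then for all x ∈ U with ‖x − a1‖ ≤ λr there exists a unique y ∈ V with ‖y − a2‖ ≤ r and F(x,y) = 0. -/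

import Mathlib

set_option maxHeartbeats 1000000

open Metric

/-- Quantitative implicit function theorem: let `F : U × V → Z` be `C¹`, `F(a) = 0`,
`D₂F(a)` an isomorphism, `λ = (1/2)(1 + ‖D₂F(a)⁻¹‖(1 + ‖D₁F(a)‖))⁻¹`, and suppose
`‖DF(p) - DF(q)‖ ≤ λ` on a closed ball `B̄_r(a) ⊆ U × V`. Then every `x ∈ U` with
`‖x - a₁‖ ≤ λ r` admits a unique `y ∈ V` with `‖y - a₂‖ ≤ r` and `F(x,y) = 0`. -/
theorem quantitative_implicit_function
    {X Y Z : Type*} [NormedAddCommGroup X] [NormedSpace ℝ X] [CompleteSpace X]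
    [NormedAddCommGroup Y] [NormedSpace ℝ Y] [CompleteSpace Y]
    [NormedAddCommGroup Z] [NormedSpace ℝ Z] [CompleteSpace Z]
    (U : Set X) (V : Set Y) (hU : IsOpen U) (hV : IsOpen V)
    (F : X × Y → Z) (F' : X × Y → (X × Y) →L[ℝ] Z)
    (hderiv : ∀ p ∈ U ×ˢ V, HasFDerivAt F (F' p) p) (hcont : ContinuousOn F' (U ×ˢ V))
    (a₁ : X) (a₂ : Y) (ha : (a₁, a₂) ∈ U ×ˢ V) (hFa : F (a₁, a₂) = 0)
    (B : Y ≃L[ℝ] Z)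
    (hB : (B : Y →L[ℝ] Z) = (F' (a₁, a₂)).comp (ContinuousLinearMap.inr ℝ X Y))
    (lam r : ℝ)
    (hlam : lam = (1 / 2) * (1 + ‖(B.symm : Z →L[ℝ] Y)‖ *
      (1 + ‖(F' (a₁, a₂)).comp (ContinuousLinearMap.inl ℝ X Y)‖))⁻¹)
    (hr : 0 < r) (hball : closedBall (a₁, a₂) r ⊆ U ×ˢ V)
    (hlip : ∀ p ∈ closedBall (a₁, a₂) r, ∀ q ∈ closedBall (a₁, a₂) r,
      ‖F' p - F' q‖ ≤ lam) :
    ∀ x ∈ U, ‖x - a₁‖ ≤ lam * r →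
      ∃! y, y ∈ V ∧ ‖y - a₂‖ ≤ r ∧ F (x, y) = 0 := by
  intro x hxU hx
  set A₁ := (F' (a₁, a₂)).comp (ContinuousLinearMap.inl ℝ X Y) with hA₁
  set c := ‖(B.symm : Z →L[ℝ] Y)‖ with hc
  set d := ‖A₁‖ with hd
  have hc0 : 0 ≤ c := norm_nonneg _
  have hd0 : 0 ≤ d := norm_nonneg _
  have hden : (0:ℝ) < 1 + c * (1 + d) := by positivity
  have hlam_pos : 0 < lam := by rw [hlam]; positivity
  have hkey : lam * (1 + c * (1 + d)) = 1/2 := by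
    rw [hlam]; field_simp
  have hexp : lam + c * lam * (1 + d) = 1/2 := by linear_combination hkey
  have hexp2 : lam + (c * lam + c * lam * d) = 1/2 := by linear_combination hkey
  have hcld : (0:ℝ) ≤ c * lam * d := mul_nonneg (mul_nonneg hc0 hlam_pos.le) hd0
  have hcl0 : (0:ℝ) ≤ c * lam := mul_nonneg hc0 hlam_pos.le
  have hcd : (0:ℝ) ≤ c * lam * (1 + d) :=
    mul_nonneg (mul_nonneg hc0 hlam_pos.le) (by linarith)
  have hlam_le : lam ≤ 1/2 := by linarith
  have hcl : c * lam * (1 + d) ≤ 1/2 := by linarith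
  have hcl2 : c * lam ≤ 1/2 := by linarith
  have hlr : lam * r ≤ r := by
    have h := mul_le_mul_of_nonneg_right (show lam ≤ 1 by linarith) hr.le
    linarith
  have hxr : ‖x - a₁‖ ≤ r := hx.trans hlr
  have hmem : ∀ y, ‖y - a₂‖ ≤ r → (x, y) ∈ closedBall (a₁, a₂) r := by
    intro y hy
    rw [mem_closedBall, Prod.dist_eq]
    simp only [dist_eq_norm]
    exact max_le hxr hy
  have hamem : ∀ x' : X, ‖x' - a₁‖ ≤ r → (x', a₂) ∈ closedBall (a₁, a₂) r := by
    intro x' hx'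
    rw [mem_closedBall, Prod.dist_eq]
    simp only [dist_eq_norm]
    exact max_le hx' (by simp [hr.le])
  have hinr : ‖ContinuousLinearMap.inr ℝ X Y‖ ≤ 1 := by
    apply ContinuousLinearMap.opNorm_le_bound _ zero_le_one
    intro y; simp [Prod.norm_def]
  have hinl : ‖ContinuousLinearMap.inl ℝ X Y‖ ≤ 1 := by
    apply ContinuousLinearMap.opNorm_le_bound _ zero_le_one
    intro y; simp [Prod.norm_def]
  have hamem0 : (a₁, a₂) ∈ closedBall (a₁, a₂) r := mem_closedBall_self hr.le
  -- Mean value estimate in y on the ball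
  have hEy : ∀ y ∈ closedBall a₂ r, ∀ y' ∈ closedBall a₂ r,
      ‖F (x, y) - F (x, y') - (B : Y →L[ℝ] Z) (y - y')‖ ≤ lam * ‖y - y'‖ := by
    intro y hy y' hy'
    refine (convex_closedBall a₂ r).norm_image_sub_le_of_norm_hasFDerivWithin_le'
      (f := fun y => F (x, y))
      (f' := fun y => (F' (x, y)).comp (ContinuousLinearMap.inr ℝ X Y)) ?_ ?_ hy' hy
    · intro z hz
      rw [mem_closedBall, dist_eq_norm] at hz
      have h1 : HasFDerivAt F (F' (x, z)) (x, z) := hderiv _ (hball (hmem z hz))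
      exact (h1.comp z (hasFDerivAt_prodMk_right x z)).hasFDerivWithinAt
    · intro z hz
      rw [mem_closedBall, dist_eq_norm] at hz
      rw [hB, ← ContinuousLinearMap.sub_comp]
      calc ‖(F' (x, z) - F' (a₁, a₂)).comp (ContinuousLinearMap.inr ℝ X Y)‖
          ≤ ‖F' (x, z) - F' (a₁, a₂)‖ * ‖ContinuousLinearMap.inr ℝ X Y‖ :=
            ContinuousLinearMap.opNorm_comp_le _ _
        _ ≤ lam * 1 :=
            mul_le_mul (hlip _ (hmem z hz) _ hamem0) hinr (norm_nonneg _) hlam_pos.le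
        _ = lam := mul_one lam
  -- Mean value estimate in x
  have hEx : ‖F (x, a₂) - F (a₁, a₂) - A₁ (x - a₁)‖ ≤ lam * ‖x - a₁‖ := by
    refine (convex_closedBall a₁ r).norm_image_sub_le_of_norm_hasFDerivWithin_le'
      (f := fun x' => F (x', a₂))
      (f' := fun x' => (F' (x', a₂)).comp (ContinuousLinearMap.inl ℝ X Y)) ?_ ?_
      (mem_closedBall_self hr.le)
      (by rw [mem_closedBall, dist_eq_norm]; exact hxr)
    · intro z hz
      rw [mem_closedBall, dist_eq_norm] at hz
      have h1 : HasFDerivAt F (F' (z, a₂)) (z, a₂) := hderiv _ (hball (hamem z hz))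
      exact (h1.comp z (hasFDerivAt_prodMk_left z a₂)).hasFDerivWithinAt
    · intro z hz
      rw [mem_closedBall, dist_eq_norm] at hz
      rw [hA₁, ← ContinuousLinearMap.sub_comp]
      calc ‖(F' (z, a₂) - F' (a₁, a₂)).comp (ContinuousLinearMap.inl ℝ X Y)‖
          ≤ ‖F' (z, a₂) - F' (a₁, a₂)‖ * ‖ContinuousLinearMap.inl ℝ X Y‖ :=
            ContinuousLinearMap.opNorm_comp_le _ _
        _ ≤ lam * 1 :=
            mul_le_mul (hlip _ (hamem z hz) _ hamem0) hinl (norm_nonneg _) hlam_pos.le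
        _ = lam := mul_one lam
  -- the Newton-type map
  set G : Y → Y := fun y => y - B.symm (F (x, y)) with hG
  have hGfix : ∀ y, F (x, y) = 0 → G y = y := by
    intro y hy; simp [hG, hy]
  have hfixG : ∀ y, G y = y → F (x, y) = 0 := by
    intro y hy
    have h0 : B.symm (F (x, y)) = 0 := sub_eq_self.mp hy
    have := congrArg B h0
    simpa using this
  -- contraction estimate
  have hcontr : ∀ y ∈ closedBall a₂ r, ∀ y' ∈ closedBall a₂ r,
      ‖G y - G y'‖ ≤ (1/2) * ‖y - y'‖ := by
    intro y hy y' hy'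
    have h1 : B.symm ((B : Y →L[ℝ] Z) (y - y')) = y - y' := by simp
    have hrw : G y - G y' = -(B.symm (F (x, y) - F (x, y') - (B : Y →L[ℝ] Z) (y - y'))) := by
      have h2 : B.symm (F (x, y) - F (x, y') - (B : Y →L[ℝ] Z) (y - y'))
          = B.symm (F (x, y)) - B.symm (F (x, y')) - (y - y') := by
        rw [map_sub, map_sub, h1]
      simp only [hG]
      rw [h2]; abel
    rw [hrw, norm_neg]
    calc ‖B.symm (F (x, y) - F (x, y') - (B : Y →L[ℝ] Z) (y - y'))‖
        ≤ c * ‖F (x, y) - F (x, y') - (B : Y →L[ℝ] Z) (y - y')‖ :=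
          (B.symm : Z →L[ℝ] Y).le_opNorm _
      _ ≤ c * (lam * ‖y - y'‖) := mul_le_mul_of_nonneg_left (hEy y hy y' hy') hc0
      _ = c * lam * ‖y - y'‖ := by ring
      _ ≤ (1/2) * ‖y - y'‖ := mul_le_mul_of_nonneg_right hcl2 (norm_nonneg _)
  -- self-map estimate
  have hmaps : ∀ y ∈ closedBall a₂ r, G y ∈ closedBall a₂ r := by
    intro y hy
    have hy' : ‖y - a₂‖ ≤ r := by rwa [mem_closedBall, dist_eq_norm] at hy
    have ha2 : a₂ ∈ closedBall a₂ r := mem_closedBall_self hr.le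
    have h1 : B.symm ((B : Y →L[ℝ] Z) (y - a₂)) = y - a₂ := by simp
    have hdecomp : F (x, y) = (F (x, y) - F (x, a₂) - (B : Y →L[ℝ] Z) (y - a₂))
        + (F (x, a₂) - F (a₁, a₂) - A₁ (x - a₁)) + A₁ (x - a₁)
        + (B : Y →L[ℝ] Z) (y - a₂) := by
      rw [hFa]; abel
    have hsum : B.symm (F (x, y))
        = B.symm (F (x, y) - F (x, a₂) - (B : Y →L[ℝ] Z) (y - a₂))
          + B.symm (F (x, a₂) - F (a₁, a₂) - A₁ (x - a₁))
          + B.symm (A₁ (x - a₁)) + (y - a₂) := by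
      conv_lhs => rw [hdecomp]
      rw [map_add, map_add, map_add, h1]
    have hrw : G y - a₂
        = -(B.symm (F (x, y) - F (x, a₂) - (B : Y →L[ℝ] Z) (y - a₂))
          + B.symm (F (x, a₂) - F (a₁, a₂) - A₁ (x - a₁))
          + B.symm (A₁ (x - a₁))) := by
      simp only [hG]
      rw [hsum]; abel
    rw [mem_closedBall, dist_eq_norm, hrw, norm_neg]
    have e1 : ‖B.symm (F (x, y) - F (x, a₂) - (B : Y →L[ℝ] Z) (y - a₂))‖ ≤ c * (lam * r) := by
      calc _ ≤ c * ‖F (x, y) - F (x, a₂) - (B : Y →L[ℝ] Z) (y - a₂)‖ :=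
            (B.symm : Z →L[ℝ] Y).le_opNorm _
        _ ≤ c * (lam * ‖y - a₂‖) := mul_le_mul_of_nonneg_left (hEy y hy a₂ ha2) hc0
        _ ≤ c * (lam * r) :=
            mul_le_mul_of_nonneg_left (mul_le_mul_of_nonneg_left hy' hlam_pos.le) hc0
    have e2 : ‖B.symm (F (x, a₂) - F (a₁, a₂) - A₁ (x - a₁))‖ ≤ c * (lam * (lam * r)) := by
      calc _ ≤ c * ‖F (x, a₂) - F (a₁, a₂) - A₁ (x - a₁)‖ :=
            (B.symm : Z →L[ℝ] Y).le_opNorm _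
        _ ≤ c * (lam * ‖x - a₁‖) := mul_le_mul_of_nonneg_left hEx hc0
        _ ≤ c * (lam * (lam * r)) :=
            mul_le_mul_of_nonneg_left (mul_le_mul_of_nonneg_left hx hlam_pos.le) hc0
    have e3 : ‖B.symm (A₁ (x - a₁))‖ ≤ c * (d * (lam * r)) := by
      calc _ ≤ c * ‖A₁ (x - a₁)‖ := (B.symm : Z →L[ℝ] Y).le_opNorm _
        _ ≤ c * (d * ‖x - a₁‖) := mul_le_mul_of_nonneg_left (A₁.le_opNorm _) hc0
        _ ≤ c * (d * (lam * r)) :=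
            mul_le_mul_of_nonneg_left (mul_le_mul_of_nonneg_left hx hd0) hc0
    have htri : ‖B.symm (F (x, y) - F (x, a₂) - (B : Y →L[ℝ] Z) (y - a₂))
          + B.symm (F (x, a₂) - F (a₁, a₂) - A₁ (x - a₁))
          + B.symm (A₁ (x - a₁))‖
        ≤ ‖B.symm (F (x, y) - F (x, a₂) - (B : Y →L[ℝ] Z) (y - a₂))‖
          + ‖B.symm (F (x, a₂) - F (a₁, a₂) - A₁ (x - a₁))‖
          + ‖B.symm (A₁ (x - a₁))‖ := norm_add₃_le
    have hh1 : c * lam * r ≤ 1/2 * r := mul_le_mul_of_nonneg_right hcl2 hr.le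
    have hh2 : c * lam * (1 + d) * r ≤ 1/2 * r := mul_le_mul_of_nonneg_right hcl hr.le
    have hclr : (0:ℝ) ≤ c * lam * r := mul_nonneg hcl0 hr.le
    have q1 : c * (lam * (lam * r)) + c * (d * (lam * r)) = (lam + d) * (c * lam * r) := by
      ring
    have q2 : (lam + d) * (c * lam * r) ≤ (1 + d) * (c * lam * r) :=
      mul_le_mul_of_nonneg_right (by linarith) hclr
    have q3 : (1 + d) * (c * lam * r) = c * lam * (1 + d) * r := by ring
    have q4 : c * (lam * r) = c * lam * r := by ring
    have hnum : c * (lam * r) + c * (lam * (lam * r)) + c * (d * (lam * r)) ≤ r := by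
      linarith
    linarith [htri, e1, e2, e3]
  -- existence via the Banach fixed point theorem on the closed ball
  haveI : Nonempty (closedBall a₂ r) := ⟨⟨a₂, mem_closedBall_self hr.le⟩⟩
  haveI : CompleteSpace (closedBall a₂ r) := isClosed_closedBall.completeSpace_coe
  set G' : closedBall a₂ r → closedBall a₂ r := fun y => ⟨G y, hmaps y y.2⟩ with hG'
  have hlip' : LipschitzWith (1/2 : NNReal) G' := by
    apply LipschitzWith.of_dist_le_mul
    intro y y'
    rw [Subtype.dist_eq, Subtype.dist_eq, dist_eq_norm, dist_eq_norm]
    calc ‖G y - G y'‖ ≤ (1/2) * ‖(y : Y) - y'‖ := hcontr y y.2 y' y'.2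
      _ = ((1/2 : NNReal) : ℝ) * ‖(y : Y) - y'‖ := by norm_num
  have hCW : ContractingWith (1/2 : NNReal) G' :=
    ⟨by rw [← NNReal.coe_lt_coe]; norm_num, hlip'⟩
  set y₀ : closedBall a₂ r := ContractingWith.fixedPoint G' hCW with hy₀
  have hfix : G' y₀ = y₀ := hCW.fixedPoint_isFixedPt
  have hGy₀ : G (y₀ : Y) = y₀ := congrArg Subtype.val hfix
  have hF0 : F (x, (y₀ : Y)) = 0 := hfixG _ hGy₀
  have hy₀r : ‖(y₀ : Y) - a₂‖ ≤ r := by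
    have h := y₀.2; rwa [mem_closedBall, dist_eq_norm] at h
  have hy₀V : (y₀ : Y) ∈ V := (hball (hmem _ hy₀r)).2
  refine ⟨(y₀ : Y), ⟨hy₀V, hy₀r, hF0⟩, ?_⟩
  rintro y ⟨_, hyr, hyF⟩
  have hyb : y ∈ closedBall a₂ r := by rwa [mem_closedBall, dist_eq_norm]
  have h1 : ‖y - (y₀ : Y)‖ ≤ (1/2) * ‖y - (y₀ : Y)‖ := by
    have h := hcontr y hyb (y₀ : Y) y₀.2
    rwa [hGfix y hyF, hGy₀] at h
  have h2 : ‖y - (y₀ : Y)‖ = 0 := le_antisymm (by linarith) (norm_nonneg _)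
  exact sub_eq_zero.mp (norm_eq_zero.mp h2)
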